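/- Suppose E = ∅ (there are no equality constraints). If a point x* ∈ A is infeasible for the problem (P), i.e. f_i(x*) > 0 for some i ∈ I, and linearised Slater's condition holds at x*, then x* is not a critical point of the penalty term φ. -/
import Mathlib


open RealInnerProductSpace Finset Filter Topology

noncomputable section

/-- Euclidean space `ℝ^d`. -/
abbrev Euc (d : ℕ) := EuclideanSpace ℝ (Fin d)

/-- The (convex-analysis) subdifferential of `f` at `y`. -/
def subdiff {d : ℕ} (f : Euc d → ℝ) (y : Euc d) : Set (Euc d) :=
  {v | ∀ x, f y + ⟪v, x - y⟫ ≤ f x}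

/-- The linearised infeasibility measure `Γ(x, y, V)` for the problem without equality
constraints. -/
def GamI {d l : ℕ} (gI hI : Fin l → Euc d → ℝ) (y : Euc d) (vI : Fin l → Euc d)
    (x : Euc d) : ℝ :=
  ∑ i, max (gI i x - hI i y - ⟪vI i, x - y⟫) 0

/-- `x` is a critical point of the penalty term `φ` (no equality constraints): there exists
a subgradient tuple `V = (v₀, v₁, …, v_ℓ)` at `x` such that `x` globally minimises
`Γ(·, x, V)` over `A`. -/
def IsCriticalPenI {d l : ℕ} (A : Set (Euc d)) (h0 : Euc d → ℝ)
    (gI hI : Fin l → Euc d → ℝ) (x : Euc d) : Prop :=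
  x ∈ A ∧ ∃ (v0 : Euc d) (vI : Fin l → Euc d), v0 ∈ subdiff h0 x ∧
    (∀ i, vI i ∈ subdiff (hI i) x) ∧
    ∀ z ∈ A, GamI gI hI x vI x ≤ GamI gI hI x vI z

/-- If `E = ∅`, `x*` ∈ A is infeasible for (P) and linearised Slater's condition holds at
`x*`, then `x*` is not a critical point of the penalty term `φ`. -/
theorem stmt18 {d l : ℕ} (A : Set (Euc d)) (g0 h0 : Euc d → ℝ)
    (gI hI : Fin l → Euc d → ℝ)
    (hA : Convex ℝ A) (hAcl : IsClosed A) (hAne : A.Nonempty)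
    (hg0 : ConvexOn ℝ Set.univ g0) (hh0 : ConvexOn ℝ Set.univ h0)
    (hgI : ∀ i, ConvexOn ℝ Set.univ (gI i)) (hhI : ∀ i, ConvexOn ℝ Set.univ (hI i))
    (xs : Euc d) (hxsA : xs ∈ A)
    (hinf : ∃ i, 0 < gI i xs - hI i xs)
    (hslater : ∀ vI : Fin l → Euc d, (∀ i, vI i ∈ subdiff (hI i) xs) →
      ∃ y ∈ A, ∀ i, gI i y - hI i xs - ⟪vI i, y - xs⟫ < 0) :
    ¬ IsCriticalPenI A h0 gI hI xs := by
  rintro ⟨-, v0, vI, -, hvI, hmin⟩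
  obtain ⟨y, hyA, hy⟩ := hslater vI hvI
  have hy0 : GamI gI hI xs vI y = 0 := by
    unfold GamI
    exact Finset.sum_eq_zero (fun i _ => max_eq_right (hy i).le)
  have hxs : 0 < GamI gI hI xs vI xs := by
    unfold GamI
    obtain ⟨i, hi⟩ := hinf
    refine Finset.sum_pos' (fun j _ => le_max_right _ _) ⟨i, Finset.mem_univ i, ?_⟩
    simp only [sub_self, inner_zero_right, sub_zero]
    exact lt_max_of_lt_left hi
  have := hmin y hyA
  rw [hy0] at this
  linarith
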